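/- Let X be a complex Banach space, M ≥ 1, and let A be a positive operator on X with constant M. Set θ_M = arcsin(1/(2M)) and Ξ_M = {z ∈ ℂ : |arg z| ≤ θ_M} ∪ {z ∈ ℂ : |z| ≤ 1/(2M)}. Then for every λ ∈ Ξ_M the operator λ + A : D(A) → X is bijective with bounded inverse (λ+A)^{-1} ∈ L(X), and (1 + |λ|)·‖(λ+A)^{-1}‖ ≤ 2M + 1. -/

import Mathlib

open MeasureTheory Real Set

noncomputable section

/-- `R` is a two-sided bounded inverse of `lam + A : D(A) → X`;
in particular `lam + A` is bijective from `D(A)` onto `X` with bounded inverse `R`. -/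
def ResolventAt {X : Type*} [NormedAddCommGroup X] [NormedSpace ℂ X]
    (A : X →ₗ.[ℂ] X) (lam : ℂ) (R : X →L[ℂ] X) : Prop :=
  (∀ x : A.domain, R (lam • (x : X) + A x) = x) ∧
  (∀ y : X, ∃ h : R y ∈ A.domain, lam • R y + A ⟨R y, h⟩ = y)

/-- `A` is a positive operator with constant `M ≥ 1` and resolvent family `R`. -/
structure IsPositive {X : Type*} [NormedAddCommGroup X] [NormedSpace ℂ X]
    (A : X →ₗ.[ℂ] X) (M : ℝ) (R : ℝ → X →L[ℂ] X) : Prop where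
  dense_domain : Dense (A.domain : Set X)
  closed_graph : IsClosed (A.graph : Set (X × X))
  one_le : 1 ≤ M
  resolvent : ∀ s : ℝ, 0 ≤ s → ResolventAt A (s : ℂ) (R s)
  bound : ∀ s : ℝ, 0 ≤ s → (1 + s) * ‖R s‖ ≤ M

lemma key_perturb {X : Type*} [NormedAddCommGroup X] [NormedSpace ℂ X] [CompleteSpace X]
    (M : ℝ) (hM : 1 ≤ M) (A : X →ₗ.[ℂ] X) (s : ℝ) (hs : 0 ≤ s)
    (R : X →L[ℂ] X) (hres : ResolventAt A (s : ℂ) R) (hRn : (1 + s) * ‖R‖ ≤ M)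
    (lam : ℂ) (hd : 2 * M * ‖lam - s‖ ≤ 1 + s) :
    ∃ Rlam : X →L[ℂ] X, ResolventAt A lam Rlam ∧
      (1 + ‖lam‖) * ‖Rlam‖ ≤ 2 * M + 1 := by
  have hM0 : (0:ℝ) < M := lt_of_lt_of_le one_pos hM
  have hs1 : (0:ℝ) < 1 + s := by linarith
  set μ : ℂ := lam - (s:ℂ) with hμdef
  have hRle : ‖R‖ ≤ M / (1 + s) := by
    rw [le_div_iff₀ hs1]; linarith [hRn]
  have hμ : ‖μ‖ ≤ (1 + s) / (2 * M) := by
    rw [le_div_iff₀ (by linarith : (0:ℝ) < 2 * M)]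
    linarith [hd]
  set t : X →L[ℂ] X := μ • R with htdef
  have ht : ‖t‖ ≤ 1 / 2 := by
    have hns : ‖t‖ = ‖μ‖ * ‖R‖ := norm_smul μ R
    rw [hns]
    calc ‖μ‖ * ‖R‖ ≤ ((1 + s) / (2 * M)) * (M / (1 + s)) := by
          apply mul_le_mul hμ hRle (norm_nonneg _) (by positivity)
      _ = 1 / 2 := by field_simp
  have htlt : ‖-t‖ < 1 := by rw [norm_neg]; linarith
  set u : (X →L[ℂ] X)ˣ := Units.oneSub (-t) htlt with hudef
  have hu : (↑u : X →L[ℂ] X) = 1 + t := by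
    show 1 - (-t) = 1 + t; rw [sub_neg_eq_add]
  have hcR : Commute R (↑u : X →L[ℂ] X) := by
    rw [hu]
    exact (Commute.one_right R).add_right ((Commute.refl R).smul_right μ)
  have hc' : Commute R (↑u⁻¹ : X →L[ℂ] X) := hcR.units_inv_right
  set Rlam : X →L[ℂ] X := R * ↑u⁻¹ with hRlamdef
  have hRlam_eq : Rlam = (↑u⁻¹ : X →L[ℂ] X) * R := hc'.eq
  -- inverse norm bound
  have huinv : ‖(↑u⁻¹ : X →L[ℂ] X)‖ ≤ 2 := by
    have h1 : (↑u⁻¹ : X →L[ℂ] X) + t * ↑u⁻¹ = 1 := by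
      have h2 := u.mul_inv
      rw [hu] at h2
      calc (↑u⁻¹ : X →L[ℂ] X) + t * ↑u⁻¹ = (1 + t) * ↑u⁻¹ := by
            rw [add_mul, one_mul]
        _ = 1 := h2
    have h3 : (↑u⁻¹ : X →L[ℂ] X) = 1 - t * ↑u⁻¹ := by
      rw [← h1]; abel
    have h5 : ‖(1 : X →L[ℂ] X)‖ ≤ 1 := ContinuousLinearMap.norm_id_le
    have h4 : ‖(↑u⁻¹ : X →L[ℂ] X)‖ ≤ 1 + ‖t‖ * ‖(↑u⁻¹ : X →L[ℂ] X)‖ := by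
      calc ‖(↑u⁻¹ : X →L[ℂ] X)‖ = ‖(1 : X →L[ℂ] X) - t * ↑u⁻¹‖ := by rw [← h3]
        _ ≤ ‖(1 : X →L[ℂ] X)‖ + ‖t * (↑u⁻¹ : X →L[ℂ] X)‖ := norm_sub_le _ _
        _ ≤ 1 + ‖t‖ * ‖(↑u⁻¹ : X →L[ℂ] X)‖ := add_le_add h5 (norm_mul_le _ _)
    nlinarith [norm_nonneg (↑u⁻¹ : X →L[ℂ] X), norm_nonneg t]
  refine ⟨Rlam, ⟨?_, ?_⟩, ?_⟩
  · intro x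
    have h1 : R ((s:ℂ) • (x : X) + A x) = x := hres.1 x
    have hexp : lam • (x : X) + A x = μ • (x : X) + ((s:ℂ) • (x : X) + A x) := by
      rw [hμdef, sub_smul]; abel
    have hstep : R (lam • (x : X) + A x) = (↑u : X →L[ℂ] X) x := by
      rw [hexp, map_add, _root_.map_smul, h1, hu]
      simp [htdef]
      abel
    calc Rlam (lam • (x : X) + A x)
        = (↑u⁻¹ : X →L[ℂ] X) (R (lam • (x : X) + A x)) := by
          rw [hRlam_eq]; rfl
      _ = (↑u⁻¹ : X →L[ℂ] X) ((↑u : X →L[ℂ] X) x) := by rw [hstep]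
      _ = ((↑u⁻¹ * ↑u : X →L[ℂ] X)) x := rfl
      _ = x := by rw [u.inv_mul]; rfl
  · intro y
    set z : X := (↑u⁻¹ : X →L[ℂ] X) y with hz
    obtain ⟨h, hAz⟩ := hres.2 z
    have heq : Rlam y = R z := rfl
    rw [show Rlam y = R z from heq]
    refine ⟨h, ?_⟩
    have hexp : lam • R z = μ • R z + (s:ℂ) • R z := by
      rw [hμdef, sub_smul]; abel
    calc lam • R z + A ⟨R z, h⟩ = μ • R z + ((s:ℂ) • R z + A ⟨R z, h⟩) := by
          rw [hexp]; abel
      _ = μ • R z + z := by rw [hAz]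
      _ = ((↑u : X →L[ℂ] X)) z := by rw [hu]; simp [htdef]; abel
      _ = ((↑u * ↑u⁻¹ : X →L[ℂ] X)) y := rfl
      _ = y := by rw [u.mul_inv]; rfl
  · have h1 : ‖Rlam‖ ≤ ‖R‖ * ‖(↑u⁻¹ : X →L[ℂ] X)‖ := norm_mul_le _ _
    have h2 : ‖Rlam‖ ≤ (M / (1 + s)) * 2 := by
      refine h1.trans ?_
      exact mul_le_mul hRle huinv (norm_nonneg _) (by positivity)
    have h3 : ‖lam‖ ≤ s + ‖μ‖ := by
      have : lam = (s:ℂ) + μ := by rw [hμdef]; ring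
      calc ‖lam‖ = ‖(s:ℂ) + μ‖ := by rw [← this]
        _ ≤ ‖(s:ℂ)‖ + ‖μ‖ := norm_add_le _ _
        _ = s + ‖μ‖ := by rw [Complex.norm_of_nonneg hs]
    have h4 : 1 + ‖lam‖ ≤ (1 + s) * (2 * M + 1) / (2 * M) := by
      rw [le_div_iff₀ (by linarith : (0:ℝ) < 2 * M)]
      nlinarith [hd, h3, hM0]
    calc (1 + ‖lam‖) * ‖Rlam‖
        ≤ ((1 + s) * (2 * M + 1) / (2 * M)) * ((M / (1 + s)) * 2) := by
          apply mul_le_mul h4 h2 (norm_nonneg _) (by positivity)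
      _ = 2 * M + 1 := by field_simp

set_option maxHeartbeats 1000000 in
theorem stmt0 {X : Type*} [NormedAddCommGroup X] [NormedSpace ℂ X] [CompleteSpace X]
    (M : ℝ) (A : X →ₗ.[ℂ] X) (R : ℝ → X →L[ℂ] X) (hA : IsPositive A M R)
    (lam : ℂ)
    (hlam : |lam.arg| ≤ Real.arcsin (1 / (2 * M)) ∨ ‖lam‖ ≤ 1 / (2 * M)) :
    ∃ Rlam : X →L[ℂ] X, ResolventAt A lam Rlam ∧
      (1 + ‖lam‖) * ‖Rlam‖ ≤ 2 * M + 1 := by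
  have hM : 1 ≤ M := hA.one_le
  have hM0 : (0:ℝ) < M := lt_of_lt_of_le one_pos hM
  have h2M : (0:ℝ) < 2 * M := by linarith
  by_cases hsmall : ‖lam‖ ≤ 1 / (2 * M)
  · -- use s = 0
    refine key_perturb M hM A 0 le_rfl (R 0) ?_ ?_ lam ?_
    · simpa using hA.resolvent 0 le_rfl
    · simpa using hA.bound 0 le_rfl
    · push_cast
      rw [sub_zero]
      have h1 : 2 * M * ‖lam‖ ≤ 2 * M * (1 / (2 * M)) :=
        mul_le_mul_of_nonneg_left hsmall (le_of_lt h2M)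
      have h2 : 2 * M * (1 / (2 * M)) = 1 := by field_simp
      linarith
  · have harc : |lam.arg| ≤ Real.arcsin (1 / (2 * M)) := hlam.resolve_right hsmall
    have hne : lam ≠ 0 := by
      intro h0
      exact hsmall (by simp [h0]; positivity)
    have habs0 : ‖lam‖ ≠ 0 := norm_ne_zero_iff.mpr hne
    have hmem : (1:ℝ) / (2 * M) ≤ 1 := by
      rw [div_le_one h2M]; linarith
    have hmem0 : (0:ℝ) ≤ 1 / (2 * M) := by positivity
    have harcpi : Real.arcsin (1 / (2 * M)) ≤ π / 2 := Real.arcsin_le_pi_div_two _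
    have hθ2 : |lam.arg| ≤ π / 2 := harc.trans harcpi
    have hθmem : lam.arg ∈ Icc (-(π/2)) (π/2) := by
      constructor <;> [linarith [neg_abs_le lam.arg]; linarith [le_abs_self lam.arg]]
    have harcmem : Real.arcsin (1 / (2 * M)) ∈ Icc (-(π/2)) (π/2) := Real.arcsin_mem_Icc _
    have hsinub : Real.sin lam.arg ≤ 1 / (2 * M) := by
      have := Real.strictMonoOn_sin.monotoneOn hθmem harcmem (by linarith [le_abs_self lam.arg])
      rwa [Real.sin_arcsin (by linarith) hmem] at this
    have hsinlb : -(1 / (2 * M)) ≤ Real.sin lam.arg := by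
      have hmem' : -Real.arcsin (1 / (2 * M)) ∈ Icc (-(π/2)) (π/2) := by
        constructor <;> [linarith [harcmem.2]; linarith [harcmem.1]]
      have := Real.strictMonoOn_sin.monotoneOn hmem' hθmem (by linarith [neg_abs_le lam.arg])
      rwa [Real.sin_neg, Real.sin_arcsin (by linarith) hmem] at this
    have hsin : |Real.sin lam.arg| ≤ 1 / (2 * M) := abs_le.2 ⟨hsinlb, hsinub⟩
    have him : lam.im = ‖lam‖ * Real.sin lam.arg := by
      rw [Complex.sin_arg]
      field_simp
    have hre : (0:ℝ) ≤ lam.re := by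
      have hcos : Real.cos lam.arg = lam.re / ‖lam‖ := Complex.cos_arg hne
      have hcosnn : 0 ≤ Real.cos lam.arg :=
        Real.cos_nonneg_of_mem_Icc ⟨hθmem.1, hθmem.2⟩
      have h5 : lam.re = ‖lam‖ * Real.cos lam.arg := by
        rw [hcos]; field_simp
      rw [h5]
      positivity
    have himle : |lam.im| ≤ ‖lam‖ / (2 * M) := by
      rw [him, abs_mul, abs_of_nonneg (norm_nonneg lam)]
      calc ‖lam‖ * |Real.sin lam.arg| ≤ ‖lam‖ * (1 / (2 * M)) :=
            mul_le_mul_of_nonneg_left hsin (norm_nonneg lam)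
        _ = ‖lam‖ / (2 * M) := by ring
    have h0' : |lam.im| * (2 * M) ≤ ‖lam‖ := by
      rw [← le_div_iff₀ h2M]; exact himle
    have hsq : lam.im ^ 2 * (4 * M ^ 2 - 1) ≤ lam.re ^ 2 := by
      have h1 : (|lam.im| * (2 * M)) ^ 2 ≤ ‖lam‖ ^ 2 := by
        have hnn : (0:ℝ) ≤ |lam.im| * (2 * M) := by positivity
        nlinarith [h0', hnn]
      have h2 : ‖lam‖ ^ 2 = lam.re ^ 2 + lam.im ^ 2 := by
        rw [Complex.sq_norm, Complex.normSq_apply]; ring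
      have hb2 : |lam.im| ^ 2 = lam.im ^ 2 := sq_abs _
      nlinarith [h1, h2, hb2]
    set c : ℝ := Real.sqrt (4 * M ^ 2 - 1) with hcdef
    have hc2 : c ^ 2 = 4 * M ^ 2 - 1 := Real.sq_sqrt (by nlinarith)
    have hcpos : 0 < c := Real.sqrt_pos.2 (by nlinarith)
    have hcne : c ≠ 0 := ne_of_gt hcpos
    set s : ℝ := lam.re + |lam.im| / c with hsdef
    have hs0 : 0 ≤ s := by positivity
    have hbc : |lam.im| * c ≤ lam.re := by
      have h1 : (|lam.im| * c) ^ 2 ≤ lam.re ^ 2 := by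
        rw [mul_pow, sq_abs, hc2]; exact hsq
      calc |lam.im| * c = Real.sqrt ((|lam.im| * c) ^ 2) := (Real.sqrt_sq (by positivity)).symm
        _ ≤ Real.sqrt (lam.re ^ 2) := Real.sqrt_le_sqrt h1
        _ = lam.re := Real.sqrt_sq hre
    have hre' : (lam - (s:ℂ)).re = -(|lam.im| / c) := by
      simp only [Complex.sub_re, Complex.ofReal_re, hsdef]
      ring
    have him' : (lam - (s:ℂ)).im = lam.im := by
      simp [Complex.sub_im]
    have habs2 : (‖lam - (s:ℂ)‖) ^ 2 = (2 * M * |lam.im| / c) ^ 2 := by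
      rw [Complex.sq_norm, Complex.normSq_apply, hre', him']
      have hb2 : |lam.im| ^ 2 = lam.im ^ 2 := sq_abs _
      field_simp
      linear_combination (1 - 4 * M ^ 2) * hb2 + lam.im ^ 2 * hc2
    have habs : ‖lam - (s:ℂ)‖ = 2 * M * |lam.im| / c := by
      calc ‖lam - (s:ℂ)‖
          = Real.sqrt ((‖lam - (s:ℂ)‖) ^ 2) :=
            (Real.sqrt_sq (norm_nonneg _)).symm
        _ = Real.sqrt ((2 * M * |lam.im| / c) ^ 2) := by rw [habs2]
        _ = 2 * M * |lam.im| / c := Real.sqrt_sq (by positivity)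
    refine key_perturb M hM A s hs0 (R s) (hA.resolvent s hs0) (hA.bound s hs0) lam ?_
    rw [habs]
    have hkey : 2 * M * (2 * M * |lam.im| / c) = |lam.im| * c + |lam.im| / c := by
      field_simp
      nlinarith [hc2]
    rw [hkey]
    linarith [hbc]
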